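/- arXiv:1808.10304 — 3 statements merged into one kernel-verified Lean document; each statement's English description precedes it below -/
import Mathlib

section
/- Let ⟨𝒟_i : i ∈ ℕ⟩ be a sequence of open dense subsets of the tree Hechler poset ℍ. Let A ⊆ ℕ be infinite, and suppose that for each i ∈ ℕ (with S_i := {stem(T) : T ∈ 𝒟_i}), for every finite sequence t ∈ ℕ^{<ω} and every ordinal α, if the set B := {z ∈ ℕ : t⌢z is β-S_i-reachable for some β < α} is infinite, then B \ A is infinite. Then for every x : ℕ → ℕ there is a decreasing sequence T_0 ⊇ T_1 ⊇ ⋯ in ℍ with T_i ∈ 𝒟_i for every i, such that the union g of the stems of the T_i is a (total) function ℕ → ℕ and x ≤_T χ_A ⊕ g, where χ_A is the characteristic function of A. (Combinatorial form of the Generic Coding with Help theorem.) -/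
namespace GCH

/-! ### Turing reducibility -/

/-- `RecursiveIn O f` : the partial function `f : ℕ →. ℕ` is partial recursive relative
to the oracle `O`.  This is the relativization of `Nat.Partrec`. -/
inductive RecursiveIn (O : ℕ →. ℕ) : (ℕ →. ℕ) → Prop
  | oracle : RecursiveIn O O
  | zero : RecursiveIn O (pure 0)
  | succ : RecursiveIn O ↑Nat.succ
  | left : RecursiveIn O ↑fun n : ℕ => n.unpair.1
  | right : RecursiveIn O ↑fun n : ℕ => n.unpair.2
  | pair {f g} : RecursiveIn O f → RecursiveIn O g →
      RecursiveIn O fun n => Nat.pair <$> f n <*> g n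
  | comp {f g} : RecursiveIn O f → RecursiveIn O g →
      RecursiveIn O fun n => g n >>= f
  | prec {f g} : RecursiveIn O f → RecursiveIn O g →
      RecursiveIn O (Nat.unpaired fun a n =>
        n.rec (f a) fun y IH => do let i ← IH; g (Nat.pair a (Nat.pair y i)))
  | rfind {f} : RecursiveIn O f →
      RecursiveIn O fun a => Nat.rfind fun n => (fun m => m = 0) <$> f (Nat.pair a n)

/-- Turing reducibility `f ≤_T g` for total functions `ℕ → ℕ`. -/
def TuringReducible (f g : ℕ → ℕ) : Prop :=
  RecursiveIn (g : ℕ →. ℕ) (f : ℕ →. ℕ)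

/-- The Turing join `a ⊕ b` : `(a ⊕ b)(2n) = a(n)`, `(a ⊕ b)(2n+1) = b(n)`. -/
def join (a b : ℕ → ℕ) : ℕ → ℕ := fun n =>
  if n % 2 = 0 then a (n / 2) else b (n / 2)

open Classical in
/-- The characteristic function of `A ⊆ ℕ`. -/
noncomputable def chi (A : Set ℕ) : ℕ → ℕ := fun n => if n ∈ A then 1 else 0

/-! ### The tree Hechler poset `ℍ` -/

/-- A condition in the tree Hechler poset `ℍ` : a nonempty tree `T ⊆ ℕ^{<ω}` closed under
initial segments, having a stem (the longest node comparable with every node of the tree),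
such that every node extending the stem has cofinitely many immediate successors.
The order is inclusion of trees: `T' ≤ T` iff `T'.tree ⊆ T.tree`. -/
structure Hechler where
  /-- the underlying set of finite sequences -/
  tree : Set (List ℕ)
  nonempty : tree.Nonempty
  /-- closed under initial segments -/
  closed : ∀ ⦃s t : List ℕ⦄, s <+: t → t ∈ tree → s ∈ tree
  /-- the stem -/
  stem : List ℕ
  stem_mem : stem ∈ tree
  /-- the stem is comparable with every node of the tree -/
  stem_comparable : ∀ t ∈ tree, stem <+: t ∨ t <+: stem
  /-- the stem is the longest node comparable with every node of the tree -/
  stem_longest : ∀ s ∈ tree, (∀ t ∈ tree, s <+: t ∨ t <+: s) → s.length ≤ stem.length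
  /-- every node extending the stem has cofinitely many immediate successors -/
  succ_cofinite : ∀ t ∈ tree, stem <+: t → {z : ℕ | t ++ [z] ∉ tree}.Finite

/-- `D ⊆ ℍ` is dense: every condition has a subset in `D`. -/
def HDense (D : Set Hechler) : Prop := ∀ T : Hechler, ∃ T' ∈ D, T'.tree ⊆ T.tree

/-- `D ⊆ ℍ` is open: any condition included in a member of `D` is in `D`. -/
def HOpen (D : Set Hechler) : Prop :=
  ∀ T T' : Hechler, T'.tree ⊆ T.tree → T ∈ D → T' ∈ D

/-- The set of stems of members of `D`. -/
def stems (D : Set Hechler) : Set (List ℕ) := {s | ∃ T ∈ D, T.stem = s}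

open Classical in
/-- `ReachAt S α t` : `t` is `α`-`S`-reachable.  `t` is `0`-`S`-reachable iff `t ∈ S`;
for `α > 0`, `t` is `α`-`S`-reachable iff infinitely many `z` are such that `t ⌢ z` is
`β`-`S`-reachable for some `β < α`. -/
noncomputable def ReachAt (S : Set (List ℕ)) (α : Ordinal.{0}) (t : List ℕ) : Prop :=
  if α = 0 then t ∈ S
  else {z : ℕ | ∃ β : Ordinal.{0}, ∃ _ : β < α, ReachAt S β (t ++ [z])}.Infinite
termination_by α

/-- `t` is `S`-reachable iff it is `α`-`S`-reachable for some ordinal `α`. -/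
def SReachable (S : Set (List ℕ)) (t : List ℕ) : Prop := ∃ α : Ordinal.{0}, ReachAt S α t

/-- `t' ⊒_A t` : `t'` extends `t` and takes no new value in `A`. -/
def ExtOutside (A : Set ℕ) (t t' : List ℕ) : Prop :=
  t <+: t' ∧ ∀ (k : ℕ) (h : k < t'.length), t.length ≤ k → t'.get ⟨k, h⟩ ∉ A

/-- The union of the stems of the `T i` is the total function `g : ℕ → ℕ`:
each stem is an initial segment of `g` and the stem lengths are unbounded. -/
def stemsUnion (T : ℕ → Hechler) (g : ℕ → ℕ) : Prop :=
  (∀ (i k : ℕ) (h : k < (T i).stem.length), (T i).stem.get ⟨k, h⟩ = g k) ∧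
    ∀ n : ℕ, ∃ i, n < (T i).stem.length

open Classical in
/-- The real `A`-encoded by `g` (relative to the fixed function `θ`):
its `i`-th value is `η_A(g(n_i))` where `n_0 < n_1 < ⋯` enumerates `{n | g n ∈ A}`
and `η_A = θ ∘ e_A⁻¹` with `e_A` the increasing enumeration of `A`. -/
noncomputable def encodedReal (θ : ℕ → ℕ) (A : Set ℕ) (g : ℕ → ℕ) : ℕ → ℕ :=
  fun i => θ (Nat.count (· ∈ A) (g (Nat.nth (fun n => g n ∈ A) i)))


/-! ### A small library for `RecursiveIn` -/

section RecLib

variable {O : ℕ →. ℕ}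

theorem RecursiveIn.of_partrec {f : ℕ →. ℕ} (h : Nat.Partrec f) : RecursiveIn O f := by
  induction h with
  | zero => exact .zero
  | succ => exact .succ
  | left => exact .left
  | right => exact .right
  | pair _ _ ih1 ih2 => exact .pair ih1 ih2
  | comp _ _ ih1 ih2 => exact .comp ih1 ih2
  | prec _ _ ih1 ih2 => exact .prec ih1 ih2
  | rfind _ ih => exact .rfind ih

theorem RecursiveIn.of_primrec {f : ℕ → ℕ} (h : Primrec f) : RecursiveIn O (f : ℕ →. ℕ) :=
  RecursiveIn.of_partrec (Nat.Partrec.of_primrec (Primrec.nat_iff.mp h))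

theorem RecursiveIn.totalComp {f g : ℕ → ℕ} (hf : RecursiveIn O (f : ℕ →. ℕ))
    (hg : RecursiveIn O (g : ℕ →. ℕ)) :
    RecursiveIn O ((fun n => f (g n) : ℕ → ℕ) : ℕ →. ℕ) := by
  have h := RecursiveIn.comp hf hg
  have heq : (fun n => (g : ℕ →. ℕ) n >>= (f : ℕ →. ℕ))
      = (((fun n => f (g n)) : ℕ → ℕ) : ℕ →. ℕ) := by
    funext n
    simp [PFun.coe_val, Part.bind_some]
    exact Part.bind_some _ _
  rwa [heq] at h

theorem RecursiveIn.totalPair {f g : ℕ → ℕ} (hf : RecursiveIn O (f : ℕ →. ℕ))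
    (hg : RecursiveIn O (g : ℕ →. ℕ)) :
    RecursiveIn O ((fun n => Nat.pair (f n) (g n) : ℕ → ℕ) : ℕ →. ℕ) := by
  have h := RecursiveIn.pair hf hg
  have heq : (fun n => Nat.pair <$> (f : ℕ →. ℕ) n <*> (g : ℕ →. ℕ) n)
      = ((fun n => Nat.pair (f n) (g n) : ℕ → ℕ) : ℕ →. ℕ) := by
    funext n
    simp [PFun.coe_val, Seq.seq]
  rwa [heq] at h

theorem RecursiveIn.totalPrec {f g : ℕ → ℕ} (hf : RecursiveIn O (f : ℕ →. ℕ))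
    (hg : RecursiveIn O (g : ℕ →. ℕ)) :
    RecursiveIn O ((Nat.unpaired fun a n =>
      n.rec (f a) (fun y IH => g (Nat.pair a (Nat.pair y IH))) : ℕ → ℕ) : ℕ →. ℕ) := by
  have h := RecursiveIn.prec hf hg
  have key : ∀ (a k : ℕ),
      (k.rec ((f : ℕ →. ℕ) a) (fun y IH => IH >>= fun i => (g : ℕ →. ℕ) (Nat.pair a (Nat.pair y i)))
        : Part ℕ)
      = Part.some (k.rec (f a) (fun y IH => g (Nat.pair a (Nat.pair y IH)))) := by
    intro a k
    induction k with
    | zero => rfl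
    | succ k ih =>
      show (k.rec ((f : ℕ →. ℕ) a)
          (fun y IH => IH >>= fun i => (g : ℕ →. ℕ) (Nat.pair a (Nat.pair y i))) : Part ℕ).bind _ = _
      rw [ih, Part.bind_some]
      rfl
  have heq : (Nat.unpaired fun a n =>
        n.rec ((f : ℕ →. ℕ) a) fun y IH => do let i ← IH; (g : ℕ →. ℕ) (Nat.pair a (Nat.pair y i)))
      = ((Nat.unpaired fun a n =>
        n.rec (f a) (fun y IH => g (Nat.pair a (Nat.pair y IH))) : ℕ → ℕ) : ℕ →. ℕ) := by
    funext n
    exact key n.unpair.1 n.unpair.2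
  rwa [heq] at h

theorem RecursiveIn.totalRfind {f : ℕ → ℕ}
    (hf : RecursiveIn O (f : ℕ →. ℕ))
    (htot : ∀ a, ∃ n, f (Nat.pair a n) = 0) :
    RecursiveIn O ((fun a => Nat.find (htot a) : ℕ → ℕ) : ℕ →. ℕ) := by
  have h := RecursiveIn.rfind hf
  have heq : (fun a => Nat.rfind fun n => (fun m => m = 0) <$> (f : ℕ →. ℕ) (Nat.pair a n))
      = ((fun a => Nat.find (htot a) : ℕ → ℕ) : ℕ →. ℕ) := by
    funext a
    apply Part.eq_some_iff.2
    apply Nat.mem_rfind.2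
    constructor
    · simp only [PFun.coe_val, Part.map_some, Part.mem_some_iff]
      simpa using Nat.find_spec (htot a)
    · intro m hm
      simp only [PFun.coe_val, Part.map_some, Part.mem_some_iff]
      simpa using Nat.find_min (htot a) hm
  rwa [heq] at h

theorem RecursiveIn.coe_eq {f g : ℕ → ℕ} (h : RecursiveIn O (f : ℕ →. ℕ)) (he : ∀ n, g n = f n) :
    RecursiveIn O (g : ℕ →. ℕ) := by
  have : (g : ℕ →. ℕ) = (f : ℕ →. ℕ) := by
    funext n
    show Part.some (g n) = Part.some (f n)
    rw [he n]
  rwa [this]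

theorem RecursiveIn.totalConst (c : ℕ) : RecursiveIn O ((fun _ => c : ℕ → ℕ) : ℕ →. ℕ) :=
  RecursiveIn.of_primrec (Primrec.const c)

end RecLib

/-! ### The master reduction lemma -/

/-- If the values of `x` can be decoded from the oracle `O` by the scheme
`x i = (∑_{m < O(2·pos i + 1)} O(2m)).unpair.1`, where `pos` is the strictly increasing
enumeration of `{n | O (2*O(2n+1)) = 1}`, then `x ≤_T O`. -/
theorem master_reduction (O x : ℕ → ℕ) (pos : ℕ → ℕ) (hmono : StrictMono pos)
    (hposq : ∀ n, O (2 * O (2 * n + 1)) = 1 ↔ ∃ i, pos i = n)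
    (hx : ∀ i, x i = (∑ m ∈ Finset.range (O (2 * pos i + 1)), O (2 * m)).unpair.1) :
    TuringReducible x O := by
  have hO : RecursiveIn (O : ℕ →. ℕ) (O : ℕ →. ℕ) := RecursiveIn.oracle
  -- `gq n = O (2n+1)`
  set gq : ℕ → ℕ := fun n => O (2 * n + 1) with hgq_def
  have hgq : RecursiveIn (O : ℕ →. ℕ) (gq : ℕ →. ℕ) :=
    hO.totalComp (RecursiveIn.of_primrec
      (Primrec.succ.comp (Primrec.nat_mul.comp (Primrec.const 2) Primrec.id)))
  -- `q n = O (2 * O (2n+1))`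
  set q : ℕ → ℕ := fun n => O (2 * gq n) with hq_def
  have hq : RecursiveIn (O : ℕ →. ℕ) (q : ℕ →. ℕ) :=
    hO.totalComp ((RecursiveIn.of_primrec
      (Primrec.nat_mul.comp (Primrec.const 2) Primrec.id)).totalComp hgq)
  -- `cnt z = ∑_{m<z} O (2m)`
  set cnt : ℕ → ℕ := fun z => ∑ m ∈ Finset.range z, O (2 * m) with hcnt_def
  have hcnt : RecursiveIn (O : ℕ →. ℕ) (cnt : ℕ →. ℕ) := by
    have hstep : RecursiveIn (O : ℕ →. ℕ)
        ((fun n => n.unpair.2.unpair.2 + O (2 * n.unpair.2.unpair.1) : ℕ → ℕ) : ℕ →. ℕ) := by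
      have h1 : RecursiveIn (O : ℕ →. ℕ)
          ((fun n => Nat.pair (n.unpair.2.unpair.2) (O (2 * n.unpair.2.unpair.1)) : ℕ → ℕ)
            : ℕ →. ℕ) := by
        apply RecursiveIn.totalPair
        · exact RecursiveIn.of_primrec
            ((Primrec.snd.comp Primrec.unpair).comp (Primrec.snd.comp Primrec.unpair))
        · exact hO.totalComp (RecursiveIn.of_primrec
            ((Primrec.nat_mul.comp (Primrec.const 2) Primrec.id).comp
              ((Primrec.fst.comp Primrec.unpair).comp (Primrec.snd.comp Primrec.unpair))))
      have h2 := (RecursiveIn.of_primrec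
        (Primrec.nat_add.comp (Primrec.fst.comp Primrec.unpair)
          (Primrec.snd.comp Primrec.unpair))).totalComp h1
      exact h2.coe_eq (by intro n; simp)
    have hP := (RecursiveIn.totalPrec (RecursiveIn.totalConst 0) hstep).totalComp
      (RecursiveIn.of_primrec (Primrec₂.natPair.comp (Primrec.const 0) Primrec.id))
    apply hP.coe_eq
    intro z
    show (∑ m ∈ Finset.range z, O (2 * m)) = _
    induction z with
    | zero => simp [Nat.unpaired]
    | succ z ih =>
      rw [Finset.sum_range_succ, ih]
      simp [Nat.unpaired, Nat.unpair_pair]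
  -- `R a = a + least k with q (a+k) = 1` : the least q-position ≥ a
  have hQex : ∀ a : ℕ, ∃ n : ℕ, (if q (a + n) = 1 then 0 else 1) = 0 := by
    intro a
    refine ⟨pos a - a, ?_⟩
    have hpa : a ≤ pos a := hmono.le_apply
    rw [Nat.add_sub_cancel' hpa]
    rw [if_pos ((hposq (pos a)).2 ⟨a, rfl⟩)]
  set f' : ℕ → ℕ := fun m => if q (m.unpair.1 + m.unpair.2) = 1 then 0 else 1 with hf'_def
  have hf' : RecursiveIn (O : ℕ →. ℕ) (f' : ℕ →. ℕ) := by
    have h1 := (RecursiveIn.of_primrec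
        (Primrec.ite (Primrec.eq.comp Primrec.id (Primrec.const 1))
          (Primrec.const 0) (Primrec.const 1))).totalComp
      (hq.totalComp (RecursiveIn.of_primrec
        (Primrec.nat_add.comp (Primrec.fst.comp Primrec.unpair)
          (Primrec.snd.comp Primrec.unpair))))
    exact h1.coe_eq (by intro n; simp; rfl)
  have hiff : ∀ a n, f' (Nat.pair a n) = 0 ↔ q (a + n) = 1 := by
    intro a n
    simp only [hf'_def, Nat.unpair_pair]
    split_ifs with h
    · simp [h]
    · simp [h]
  have htot : ∀ a, ∃ n, f' (Nat.pair a n) = 0 := by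
    intro a
    obtain ⟨n, hn⟩ := hQex a
    refine ⟨n, (hiff a n).2 ?_⟩
    by_contra h
    rw [if_neg h] at hn
    exact one_ne_zero hn
  set fnd : ℕ → ℕ := fun a => a + Nat.find (htot a) with hfnd_def
  have hfnd : RecursiveIn (O : ℕ →. ℕ) (fnd : ℕ →. ℕ) := by
    have h1 := (RecursiveIn.of_primrec
        (Primrec.nat_add.comp (Primrec.fst.comp Primrec.unpair)
          (Primrec.snd.comp Primrec.unpair))).totalComp
      (RecursiveIn.totalPair (RecursiveIn.of_primrec Primrec.id) (hf'.totalRfind htot))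
    exact h1.coe_eq (by intro n; simp; rfl)
  -- properties of fnd
  have hfnd_q : ∀ a, q (fnd a) = 1 := by
    intro a
    exact (hiff a _).1 (Nat.find_spec (htot a))
  have hfnd_le : ∀ a m, a ≤ m → q m = 1 → fnd a ≤ m := by
    intro a m ham hm
    have : Nat.find (htot a) ≤ m - a := by
      apply Nat.find_le
      refine (hiff a _).2 ?_
      rw [Nat.add_sub_cancel' ham]
      exact hm
    show a + Nat.find (htot a) ≤ m
    omega
  have hfnd_ge : ∀ a, a ≤ fnd a := fun a => Nat.le_add_right a _
  -- the enumeration facts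
  have hposmem : ∀ i, q (pos i) = 1 := fun i => (hposq (pos i)).2 ⟨i, rfl⟩
  have hfnd0 : fnd 0 = pos 0 := by
    have h1 : fnd 0 ≤ pos 0 := hfnd_le 0 (pos 0) (Nat.zero_le _) (hposmem 0)
    obtain ⟨i, hi⟩ := (hposq (fnd 0)).1 (hfnd_q 0)
    have h2 : pos 0 ≤ pos i := hmono.monotone (Nat.zero_le i)
    omega
  have hfnds : ∀ i, fnd (pos i + 1) = pos (i + 1) := by
    intro i
    have hlt : pos i < pos (i + 1) := hmono (Nat.lt_succ_self i)
    have h1 : fnd (pos i + 1) ≤ pos (i + 1) :=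
      hfnd_le _ _ (by omega) (hposmem (i + 1))
    obtain ⟨j, hj⟩ := (hposq (fnd (pos i + 1))).1 (hfnd_q _)
    have h2 : pos i + 1 ≤ pos j := by rw [hj]; exact hfnd_ge _
    have h3 : i < j := by
      by_contra hc
      push_neg at hc
      have := hmono.monotone hc
      omega
    have h4 : pos (i + 1) ≤ pos j := hmono.monotone h3
    omega
  -- the iterate `N i = pos i`
  set gstep : ℕ → ℕ := fun m => fnd (m.unpair.2.unpair.2 + 1) with hgstep_def
  have hgstep : RecursiveIn (O : ℕ →. ℕ) (gstep : ℕ →. ℕ) :=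
    hfnd.totalComp (RecursiveIn.of_primrec
      (Primrec.succ.comp ((Primrec.snd.comp Primrec.unpair).comp
        (Primrec.snd.comp Primrec.unpair))))
  set F : ℕ → ℕ := Nat.unpaired fun a n =>
    n.rec ((fun _ => fnd 0 : ℕ → ℕ) a) (fun y IH => gstep (Nat.pair a (Nat.pair y IH)))
    with hF_def
  have hF : RecursiveIn (O : ℕ →. ℕ) (F : ℕ →. ℕ) :=
    RecursiveIn.totalPrec (RecursiveIn.totalConst (fnd 0)) hgstep
  set N : ℕ → ℕ := fun i => F (Nat.pair 0 i) with hN_def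
  have hN : RecursiveIn (O : ℕ →. ℕ) (N : ℕ →. ℕ) :=
    hF.totalComp (RecursiveIn.of_primrec (Primrec₂.natPair.comp (Primrec.const 0) Primrec.id))
  have hNval : ∀ i, N i = pos i := by
    intro i
    show F (Nat.pair 0 i) = pos i
    induction i with
    | zero =>
      show Nat.unpaired _ _ = _
      simp only [Nat.unpaired, Nat.unpair_pair]
      exact hfnd0
    | succ i ih =>
      rw [hF_def, hgstep_def] at ih ⊢
      simp only [Nat.unpaired, Nat.unpair_pair] at ih ⊢
      show fnd (Nat.rec (fnd 0) (fun y IH => fnd (IH + 1)) i + 1) = pos (i + 1)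
      rw [ih]
      exact hfnds i
  -- final assembly
  have hfinal := (RecursiveIn.of_primrec
      (Primrec.fst.comp Primrec.unpair)).totalComp (hcnt.totalComp (hgq.totalComp hN))
  show RecursiveIn (O : ℕ →. ℕ) (x : ℕ →. ℕ)
  apply hfinal.coe_eq
  intro i
  rw [hx i]
  show _ = (Nat.unpair (cnt (gq (N i)))).1
  rw [hNval i]

/-! ### Reachability lemmas -/

theorem reachAt_zero {S : Set (List ℕ)} {t : List ℕ} : ReachAt S 0 t ↔ t ∈ S := by
  rw [ReachAt]; simp

theorem reachAt_pos {S : Set (List ℕ)} {α : Ordinal.{0}} (hα : α ≠ 0) {t : List ℕ} :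
    ReachAt S α t ↔
      {z : ℕ | ∃ β : Ordinal.{0}, ∃ _ : β < α, ReachAt S β (t ++ [z])}.Infinite := by
  rw [ReachAt]; simp [hα]

theorem ordinal_succ_ne_zero (β : Ordinal.{0}) : β + 1 ≠ 0 := by
  rw [Ordinal.add_one_eq_succ]; exact Order.succ_ne_bot β

theorem ordinal_lt_succ_of_le {α β : Ordinal.{0}} (h : α ≤ β) : α < β + 1 := by
  refine h.trans_lt ?_
  rw [Ordinal.add_one_eq_succ]; exact Order.lt_succ β

open Classical in
theorem sreachable_of_infinite {S : Set (List ℕ)} {t : List ℕ}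
    (h : {z : ℕ | SReachable S (t ++ [z])}.Infinite) : SReachable S t := by
  set ρ : ℕ → Ordinal.{0} := fun z => if hz : SReachable S (t ++ [z]) then hz.choose else 0
    with hρ
  refine ⟨(⨆ z, ρ z) + 1, ?_⟩
  rw [reachAt_pos (ordinal_succ_ne_zero _)]
  apply h.mono
  intro z hz
  simp only [Set.mem_setOf_eq] at hz ⊢
  refine ⟨ρ z, ordinal_lt_succ_of_le (le_ciSup (Ordinal.bddAbove_range ρ) z), ?_⟩
  rw [hρ]
  simp only [dif_pos hz]
  exact hz.choose_spec

theorem finite_reachable_succ_of_not {S : Set (List ℕ)} {t : List ℕ}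
    (h : ¬ SReachable S t) : {z : ℕ | SReachable S (t ++ [z])}.Finite := by
  by_contra hinf
  exact h (sreachable_of_infinite hinf)

/-! ### `ExtOutside` lemmas -/

theorem ExtOutside.refl (A : Set ℕ) (t : List ℕ) : ExtOutside A t t :=
  ⟨List.prefix_refl t, fun k h hk => absurd hk (not_le.mpr h)⟩

theorem ExtOutside.single {A : Set ℕ} {z : ℕ} (t : List ℕ) (hz : z ∉ A) :
    ExtOutside A t (t ++ [z]) := by
  refine ⟨⟨[z], rfl⟩, ?_⟩
  intro k h hk
  have hlen : k = t.length := by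
    have := h
    simp only [List.length_append, List.length_singleton] at this
    omega
  subst hlen
  have hval : (t ++ [z]).get ⟨t.length, h⟩ = z := by simp
  rw [hval]
  exact hz

theorem ExtOutside.trans {A : Set ℕ} {t u v : List ℕ}
    (h1 : ExtOutside A t u) (h2 : ExtOutside A u v) : ExtOutside A t v := by
  refine ⟨h1.1.trans h2.1, ?_⟩
  intro k h hk
  by_cases hku : k < u.length
  · have hval : v.get ⟨k, h⟩ = u.get ⟨k, hku⟩ := by
      simp only [List.get_eq_getElem]
      exact (h2.1.getElem hku).symm
    rw [hval]
    exact h1.2 k hku hk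
  · exact h2.2 k h (le_of_not_gt hku)

/-! ### Comparability helper lemmas -/

theorem concat_prefix_eq {t s : List ℕ} {z₁ z₂ : ℕ}
    (h1 : t ++ [z₁] <+: s) (h2 : t ++ [z₂] <+: s) : z₁ = z₂ := by
  rcases List.prefix_or_prefix_of_prefix h1 h2 with h | h
  · have := List.IsPrefix.eq_of_length_le h (by simp)
    simpa using this
  · have := List.IsPrefix.eq_of_length_le h (by simp)
    simpa using this.symm

/-- In a tree where `t` is comparable with everything and has two distinct immediate
successors, any element comparable with everything has length at most that of `t`. -/
theorem length_le_of_branching {tr : Set (List ℕ)} {t : List ℕ}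
    (hcomp : ∀ s ∈ tr, t <+: s ∨ s <+: t)
    {z₁ z₂ : ℕ} (hne : z₁ ≠ z₂) (h1 : t ++ [z₁] ∈ tr) (h2 : t ++ [z₂] ∈ tr)
    {s : List ℕ} (hs : s ∈ tr) (hall : ∀ u ∈ tr, s <+: u ∨ u <+: s) :
    s.length ≤ t.length := by
  rcases hcomp s hs with h | h
  · -- t <+: s : show s = t
    by_contra hgt
    push_neg at hgt
    have hslen : t.length < s.length := hgt
    have key : ∀ z : ℕ, t ++ [z] ∈ tr → t ++ [z] <+: s := by
      intro z hz
      rcases hall _ hz with h' | h'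
      · -- s <+: t ++ [z]
        have : s = t ++ [z] := List.IsPrefix.eq_of_length_le h' (by simp; omega)
        rw [this]
      · exact h'
    exact hne (concat_prefix_eq (key z₁ h1) (key z₂ h2))
  · exact h.length_le

/-! ### Tree constructions -/

/-- The restriction of a Hechler condition to the nodes comparable with a given
node `t` of the tree extending the stem ; its stem is `t`. -/
def restrictAbove (T : Hechler) (t : List ℕ) (ht : t ∈ T.tree) (hst : T.stem <+: t) :
    Hechler where
  tree := {s ∈ T.tree | s <+: t ∨ t <+: s}
  nonempty := ⟨t, ht, Or.inl (List.prefix_refl t)⟩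
  closed := by
    rintro s u hsu ⟨hu, hcmp⟩
    refine ⟨T.closed hsu hu, ?_⟩
    rcases hcmp with h | h
    · exact Or.inl (hsu.trans h)
    · rcases List.prefix_or_prefix_of_prefix hsu h with h' | h'
      · exact Or.inl h'
      · exact Or.inr h'
  stem := t
  stem_mem := ⟨ht, Or.inl (List.prefix_refl t)⟩
  stem_comparable := by
    rintro u ⟨_, hcmp⟩
    rcases hcmp with h | h
    · exact Or.inr h
    · exact Or.inl h
  stem_longest := by
    intro s hs hall
    have hcof := T.succ_cofinite t ht hst
    have hinf : {z : ℕ | t ++ [z] ∈ T.tree}.Infinite := by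
      have := hcof.infinite_compl
      apply this.mono
      intro z hz
      simpa using hz
    obtain ⟨z₁, hz₁, z₂, hz₂, hne⟩ := hinf.nontrivial
    refine length_le_of_branching ?_ hne ?_ ?_ hs hall
    · rintro u ⟨_, hcmp⟩
      exact hcmp.symm
    · exact ⟨hz₁, Or.inr ⟨[z₁], rfl⟩⟩
    · exact ⟨hz₂, Or.inr ⟨[z₂], rfl⟩⟩
  succ_cofinite := by
    rintro s ⟨hsT, _⟩ hts
    have hTs := T.succ_cofinite s hsT (hst.trans hts)
    apply hTs.subset
    intro z hz
    simp only [Set.mem_setOf_eq] at hz ⊢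
    intro hmem
    exact hz ⟨hmem, Or.inr (hts.trans ⟨[z], rfl⟩)⟩

theorem restrictAbove_subset (T : Hechler) (t : List ℕ) (ht : t ∈ T.tree)
    (hst : T.stem <+: t) : (restrictAbove T t ht hst).tree ⊆ T.tree :=
  fun _ hs => hs.1

/-- The meet of two conditions `T`, `T₀` where the stem of `T₀` is a node of `T`
extending the stem of `T` : all nodes lying in both trees comparable with `stem T₀`. -/
def meetCond (T T₀ : Hechler) (h : T₀.stem ∈ T.tree) (hs : T.stem <+: T₀.stem) :
    Hechler where
  tree := {s | s ∈ T.tree ∧ s ∈ T₀.tree ∧ (s <+: T₀.stem ∨ T₀.stem <+: s)}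
  nonempty := ⟨T₀.stem, h, T₀.stem_mem, Or.inl (List.prefix_refl _)⟩
  closed := by
    rintro s u hsu ⟨hu1, hu2, hcmp⟩
    refine ⟨T.closed hsu hu1, T₀.closed hsu hu2, ?_⟩
    rcases hcmp with h' | h'
    · exact Or.inl (hsu.trans h')
    · rcases List.prefix_or_prefix_of_prefix hsu h' with h'' | h''
      · exact Or.inl h''
      · exact Or.inr h''
  stem := T₀.stem
  stem_mem := ⟨h, T₀.stem_mem, Or.inl (List.prefix_refl _)⟩
  stem_comparable := by
    rintro u ⟨_, _, hcmp⟩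
    rcases hcmp with h' | h'
    · exact Or.inr h'
    · exact Or.inl h'
  stem_longest := by
    intro s hs' hall
    have hc1 := T.succ_cofinite T₀.stem h hs
    have hc2 := T₀.succ_cofinite T₀.stem T₀.stem_mem (List.prefix_refl _)
    have hinf : {z : ℕ | T₀.stem ++ [z] ∈ T.tree ∧ T₀.stem ++ [z] ∈ T₀.tree}.Infinite := by
      have := (hc1.union hc2).infinite_compl
      apply this.mono
      intro z hz
      simp only [Set.mem_compl_iff, Set.mem_union, Set.mem_setOf_eq] at hz
      push_neg at hz
      exact ⟨hz.1, hz.2⟩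
    obtain ⟨z₁, hz₁, z₂, hz₂, hne⟩ := hinf.nontrivial
    refine length_le_of_branching ?_ hne ?_ ?_ hs' hall
    · rintro u ⟨_, _, hcmp⟩
      exact hcmp.symm
    · exact ⟨hz₁.1, hz₁.2, Or.inr ⟨[z₁], rfl⟩⟩
    · exact ⟨hz₂.1, hz₂.2, Or.inr ⟨[z₂], rfl⟩⟩
  succ_cofinite := by
    rintro s ⟨hs1, hs2, _⟩ hts
    have h1 := T.succ_cofinite s hs1 (hs.trans hts)
    have h2 := T₀.succ_cofinite s hs2 hts
    apply (h1.union h2).subset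
    intro z hz
    simp only [Set.mem_setOf_eq, Set.mem_union] at hz ⊢
    by_contra hc
    push_neg at hc
    exact hz ⟨hc.1, hc.2, Or.inr (hts.trans ⟨[z], rfl⟩)⟩

/-- The full tree : the maximum of `ℍ`. -/
def fullT : Hechler where
  tree := Set.univ
  nonempty := ⟨[], trivial⟩
  closed := fun _ _ _ _ => trivial
  stem := []
  stem_mem := trivial
  stem_comparable := fun t _ => Or.inl (List.nil_prefix)
  stem_longest := by
    intro s hs hall
    exact length_le_of_branching (fun u _ => Or.inl (List.nil_prefix))
      (by norm_num : (0:ℕ) ≠ 1) (Set.mem_univ ([] ++ [0])) (Set.mem_univ ([] ++ [1])) hs hall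
  succ_cofinite := by
    intro t _ _
    convert Set.finite_empty
    simp

/-! ### Every node of a condition is reachable via the stems of a dense set -/

theorem stem_reachable {Dset : Set Hechler} (hD : HDense Dset) (T : Hechler) (t : List ℕ)
    (ht : t ∈ T.tree) (hst : T.stem <+: t) : SReachable (stems Dset) t := by
  by_contra hnr
  set S : Set (List ℕ) := stems Dset with hS
  set tr' : Set (List ℕ) :=
    {s ∈ T.tree | s <+: t ∨ (t <+: s ∧ ∀ u, t <+: u → u <+: s → ¬ SReachable S u)} with htr'
  have hmemt : t ∈ tr' := by
    refine ⟨ht, Or.inr ⟨List.prefix_refl t, ?_⟩⟩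
    intro u h1 h2
    have : u = t := List.IsPrefix.eq_of_length_le h2 h1.length_le
    rw [this]
    exact hnr
  have hcomp : ∀ s ∈ tr', t <+: s ∨ s <+: t := by
    rintro s ⟨_, hcmp⟩
    rcases hcmp with h | h
    · exact Or.inr h
    · exact Or.inl h.1
  have hsucc : ∀ s ∈ tr', t <+: s → {z : ℕ | s ++ [z] ∉ tr'}.Finite := by
    rintro s ⟨hsT, hcmp⟩ hts
    have hH : ∀ u, t <+: u → u <+: s → ¬ SReachable S u := by
      rcases hcmp with h | h
      · have : t = s := List.IsPrefix.eq_of_length_le hts h.length_le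
        subst this
        intro u h1 h2
        have : u = t := List.IsPrefix.eq_of_length_le h2 h1.length_le
        rw [this]; exact hnr
      · exact h.2
    have hnrs : ¬ SReachable S s := hH s hts (List.prefix_refl s)
    have hfin1 := T.succ_cofinite s hsT (hst.trans hts)
    have hfin2 := finite_reachable_succ_of_not hnrs
    apply (hfin1.union hfin2).subset
    intro z hz
    simp only [Set.mem_setOf_eq, Set.mem_union] at hz ⊢
    by_contra hc
    push_neg at hc
    apply hz
    refine ⟨hc.1, Or.inr ⟨hts.trans ⟨[z], rfl⟩, ?_⟩⟩
    intro u h1 h2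
    rcases List.prefix_concat_iff.mp h2 with h' | h'
    · rw [h']; exact hc.2
    · exact hH u h1 h'
  have htwo : ∃ z₁ z₂ : ℕ, z₁ ≠ z₂ ∧ t ++ [z₁] ∈ tr' ∧ t ++ [z₂] ∈ tr' := by
    have hinf : {z : ℕ | t ++ [z] ∈ tr'}.Infinite := by
      have := (hsucc t hmemt (List.prefix_refl t)).infinite_compl
      apply this.mono
      intro z hz
      simpa using hz
    obtain ⟨z₁, hz₁, z₂, hz₂, hne⟩ := hinf.nontrivial
    exact ⟨z₁, z₂, hne, hz₁, hz₂⟩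
  let T' : Hechler :=
    { tree := tr'
      nonempty := ⟨t, hmemt⟩
      closed := by
        rintro s u hsu ⟨huT, hcmp⟩
        refine ⟨T.closed hsu huT, ?_⟩
        rcases hcmp with h | h
        · exact Or.inl (hsu.trans h)
        · rcases List.prefix_or_prefix_of_prefix hsu h.1 with h' | h'
          · exact Or.inl h'
          · exact Or.inr ⟨h', fun v hv1 hv2 => h.2 v hv1 (hv2.trans hsu)⟩
      stem := t
      stem_mem := hmemt
      stem_comparable := hcomp
      stem_longest := by
        intro s hs hall
        obtain ⟨z₁, z₂, hne, h1, h2⟩ := htwo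
        exact length_le_of_branching hcomp hne h1 h2 hs hall
      succ_cofinite := hsucc }
  obtain ⟨T'', hT''D, hsub⟩ := hD T'
  have hs''mem : T''.stem ∈ tr' := hsub T''.stem_mem
  have hs''S : SReachable S T''.stem := ⟨0, reachAt_zero.2 ⟨T'', hT''D, rfl⟩⟩
  rcases hs''mem.2 with h | h
  · -- T''.stem <+: t : impossible
    by_cases heq : T''.stem = t
    · rw [heq] at hs''S; exact hnr hs''S
    · have hlt : T''.stem.length + 1 ≤ t.length := by
        have hle := h.length_le
        rcases Nat.lt_or_ge T''.stem.length t.length with h' | h'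
        · omega
        · exact absurd (List.IsPrefix.eq_of_length_le h h') heq
      have hc := T''.succ_cofinite T''.stem T''.stem_mem (List.prefix_refl _)
      have hinf : {z : ℕ | T''.stem ++ [z] ∈ T''.tree}.Infinite := by
        have := hc.infinite_compl
        apply this.mono
        intro z hz
        simpa using hz
      obtain ⟨z₁, hz₁, z₂, hz₂, hne⟩ := hinf.nontrivial
      have key : ∀ z : ℕ, T''.stem ++ [z] ∈ T''.tree → T''.stem ++ [z] <+: t := by
        intro z hz
        have hmem := hsub hz
        rcases hcomp _ hmem with h' | h'
        · have heq2 : t = T''.stem ++ [z] :=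
            List.IsPrefix.eq_of_length_le h' (by simpa using hlt)
          rw [← heq2]
        · exact h'
      exact hne (concat_prefix_eq (key z₁ hz₁) (key z₂ hz₂))
  · exact h.2 T''.stem h.1 (List.prefix_refl _) hs''S

/-! ### Descending to a stem of the dense set outside `A` -/

theorem descend {S : Set (List ℕ)} {A : Set ℕ}
    (hstick : ∀ (t : List ℕ) (α : Ordinal.{0}),
      {z : ℕ | ∃ β : Ordinal.{0}, ∃ _ : β < α, ReachAt S β (t ++ [z])}.Infinite →
      ({z : ℕ | ∃ β : Ordinal.{0}, ∃ _ : β < α, ReachAt S β (t ++ [z])} \ A).Infinite)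
    (T : Hechler) :
    ∀ (α : Ordinal.{0}) (t : List ℕ), ReachAt S α t → t ∈ T.tree → T.stem <+: t →
      ∃ t', t <+: t' ∧ t' ∈ T.tree ∧ t' ∈ S ∧ ExtOutside A t t' := by
  intro α
  induction α using Ordinal.induction with
  | h α IH =>
    intro t hreach htT hstem
    by_cases hα : α = 0
    · subst hα
      exact ⟨t, List.prefix_refl t, htT, reachAt_zero.1 hreach, ExtOutside.refl A t⟩
    · have hinf := (reachAt_pos hα).1 hreach
      have hdiff := hstick t α hinf
      have hTfin := T.succ_cofinite t htT hstem
      have hne : (({z : ℕ | ∃ β : Ordinal.{0}, ∃ _ : β < α, ReachAt S β (t ++ [z])} \ A)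
          \ {z : ℕ | t ++ [z] ∉ T.tree}).Nonempty := (hdiff.diff hTfin).nonempty
      obtain ⟨z, hz⟩ := hne
      obtain ⟨⟨⟨β, hβ, hreachz⟩, hzA⟩, hzT⟩ := hz
      have hzT' : t ++ [z] ∈ T.tree := not_not.mp hzT
      obtain ⟨t', h1, h2, h3, h4⟩ := IH β hβ (t ++ [z]) hreachz hzT'
        (hstem.trans ⟨[z], rfl⟩)
      exact ⟨t', (List.prefix_append t [z]).trans h1, h2, h3,
        (ExtOutside.single t hzA).trans h4⟩

/-! ### Meeting a dense open set while avoiding `A` -/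

theorem meet_dense {Dset : Set Hechler} {A : Set ℕ} (hDd : HDense Dset) (hDo : HOpen Dset)
    (hstick : ∀ (t : List ℕ) (α : Ordinal.{0}),
      {z : ℕ | ∃ β : Ordinal.{0}, ∃ _ : β < α, ReachAt (stems Dset) β (t ++ [z])}.Infinite →
      ({z : ℕ | ∃ β : Ordinal.{0}, ∃ _ : β < α, ReachAt (stems Dset) β (t ++ [z])} \ A).Infinite)
    (T : Hechler) :
    ∃ T' : Hechler, T' ∈ Dset ∧ T'.tree ⊆ T.tree ∧ T.stem <+: T'.stem ∧
      ExtOutside A T.stem T'.stem := by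
  obtain ⟨α, hα⟩ := stem_reachable hDd T T.stem T.stem_mem (List.prefix_refl _)
  obtain ⟨t', h1, h2, h3, h4⟩ :=
    descend hstick T α T.stem hα T.stem_mem (List.prefix_refl _)
  obtain ⟨T₀, hT₀D, hT₀stem⟩ := h3
  subst hT₀stem
  refine ⟨meetCond T T₀ h2 h1, ?_, fun s hs => hs.1, h1, h4⟩
  exact hDo T₀ (meetCond T T₀ h2 h1) (fun s hs => hs.2.1) hT₀D

/-! ### The coding step -/

open Classical in
theorem code_step {A : Set ℕ} (hA : A.Infinite) (T : Hechler) (c : ℕ) :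
    ∃ z : ℕ, z ∈ A ∧ (Nat.unpair (Nat.count (· ∈ A) z)).1 = c ∧
      T.stem ++ [z] ∈ T.tree := by
  have hA' : (setOf (· ∈ A)).Infinite := hA
  have hcof := T.succ_cofinite T.stem T.stem_mem (List.prefix_refl _)
  set f : ℕ → ℕ := fun j => Nat.nth (· ∈ A) (Nat.pair c j) with hf
  have hmono : StrictMono f :=
    (Nat.nth_strictMono hA').comp (fun _ _ h => Nat.pair_lt_pair_right c h)
  have hrange : (Set.range f).Infinite := Set.infinite_range_of_injective hmono.injective
  obtain ⟨z, hz⟩ := (hrange.diff hcof).nonempty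
  obtain ⟨⟨j, hj⟩, hzT⟩ := hz
  refine ⟨z, ?_, ?_, not_not.mp hzT⟩
  · rw [← hj]
    exact Nat.nth_mem_of_infinite hA' _
  · rw [← hj]
    show (Nat.unpair (Nat.count (· ∈ A) (Nat.nth (· ∈ A) (Nat.pair c j)))).1 = c
    rw [Nat.count_nth_of_infinite hA']
    simp [Nat.unpair_pair]

/-- **Generic Coding with Help** (combinatorial form). -/
theorem generic_coding_with_help (D : ℕ → Set Hechler)
    (hDopen : ∀ i, HOpen (D i)) (hDdense : ∀ i, HDense (D i))
    (A : Set ℕ) (hA : A.Infinite)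
    (hstick : ∀ (i : ℕ) (t : List ℕ) (α : Ordinal.{0}),
      {z : ℕ | ∃ β : Ordinal.{0}, ∃ _ : β < α,
        ReachAt (stems (D i)) β (t ++ [z])}.Infinite →
      ({z : ℕ | ∃ β : Ordinal.{0}, ∃ _ : β < α,
        ReachAt (stems (D i)) β (t ++ [z])} \ A).Infinite)
    (x : ℕ → ℕ) :
    ∃ T : ℕ → Hechler,
      (∀ i, (T (i + 1)).tree ⊆ (T i).tree) ∧
      (∀ i, T i ∈ D i) ∧
      ∃ g : ℕ → ℕ, stemsUnion T g ∧
        TuringReducible x (join (chi A) g) := by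
  classical
  -- the inductive step : given a condition, insert a coding value and meet `D i`
  have hstep : ∀ (i c : ℕ) (T : Hechler), ∃ T' : Hechler,
      T' ∈ D i ∧ T'.tree ⊆ T.tree ∧
      ∃ z : ℕ, z ∈ A ∧ (Nat.unpair (Nat.count (· ∈ A) z)).1 = c ∧
        T.stem ++ [z] <+: T'.stem ∧ ExtOutside A (T.stem ++ [z]) T'.stem := by
    intro i c T
    obtain ⟨z, hzA, hzc, hzT⟩ := code_step hA T c
    obtain ⟨T', hT'D, hsub, hstem, hout⟩ :=
      meet_dense (hDdense i) (hDopen i) (hstick i)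
        (restrictAbove T (T.stem ++ [z]) hzT (List.prefix_append _ _))
    exact ⟨T', hT'D, hsub.trans (restrictAbove_subset _ _ _ _), z, hzA, hzc, hstem, hout⟩
  -- the base step
  have hbase : ∃ T0 : Hechler, T0 ∈ D 0 ∧ ExtOutside A [] T0.stem := by
    obtain ⟨T', hT'D, _, _, hout⟩ :=
      meet_dense (hDdense 0) (hDopen 0) (hstick 0) fullT
    exact ⟨T', hT'D, hout⟩
  -- the sequence of conditions
  set T : ℕ → Hechler := fun i =>
    Nat.rec hbase.choose (fun i Ti => (hstep (i + 1) (x i) Ti).choose) i with hT_def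
  have hTsucc : ∀ i, T (i + 1) = (hstep (i + 1) (x i) (T i)).choose := fun i => rfl
  have hmem : ∀ i, T i ∈ D i := by
    intro i
    cases i with
    | zero => exact hbase.choose_spec.1
    | succ i => rw [hTsucc i]; exact (hstep (i + 1) (x i) (T i)).choose_spec.1
  have hsub : ∀ i, (T (i + 1)).tree ⊆ (T i).tree := by
    intro i
    rw [hTsucc i]
    exact (hstep (i + 1) (x i) (T i)).choose_spec.2.1
  have hZ : ∀ i, ∃ z : ℕ, z ∈ A ∧ (Nat.unpair (Nat.count (· ∈ A) z)).1 = x i ∧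
      (T i).stem ++ [z] <+: (T (i + 1)).stem ∧
      ExtOutside A ((T i).stem ++ [z]) (T (i + 1)).stem := by
    intro i
    rw [hTsucc i]
    exact (hstep (i + 1) (x i) (T i)).choose_spec.2.2
  choose zf hzA hzc hzpre hzout using hZ
  have hT0out : ExtOutside A [] (T 0).stem := hbase.choose_spec.2
  -- the stems form a strictly lengthening chain
  have hchain : ∀ i, (T i).stem <+: (T (i + 1)).stem :=
    fun i => (List.prefix_append _ _).trans (hzpre i)
  have hchain' : ∀ i j, i ≤ j → (T i).stem <+: (T j).stem := by
    intro i j hij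
    induction j with
    | zero => cases Nat.le_zero.mp hij; exact List.prefix_refl _
    | succ j ihj =>
      rcases Nat.lt_or_ge i (j + 1) with h | h
      · exact (ihj (Nat.lt_succ_iff.mp h)).trans (hchain j)
      · have : i = j + 1 := le_antisymm hij h
        rw [this]
  have hlensucc : ∀ i, (T i).stem.length < (T (i + 1)).stem.length := by
    intro i
    have := (hzpre i).length_le
    simp only [List.length_append, List.length_singleton] at this
    omega
  have hlenge : ∀ i, i ≤ (T i).stem.length := by
    intro i
    induction i with
    | zero => exact Nat.zero_le _
    | succ i ih => have := hlensucc i; omega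
  have hlen : ∀ n : ℕ, n < (T (n + 1)).stem.length := by
    intro n
    have := hlenge (n + 1)
    omega
  -- the union of the stems
  set g : ℕ → ℕ := fun n => (T (n + 1)).stem.get ⟨n, hlen n⟩ with hg_def
  have g_eq : ∀ (j n : ℕ) (h : n < (T j).stem.length), (T j).stem.get ⟨n, h⟩ = g n := by
    intro j n h
    show _ = (T (n + 1)).stem.get ⟨n, hlen n⟩
    simp only [List.get_eq_getElem]
    rcases le_total j (n + 1) with hje | hje
    · exact (hchain' j (n + 1) hje).getElem h
    · exact ((hchain' (n + 1) j hje).getElem (hlen n)).symm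
  -- the positions of the coding values
  set pos : ℕ → ℕ := fun i => (T i).stem.length with hpos_def
  have hposmono : StrictMono pos := strictMono_nat_of_lt_succ hlensucc
  have gval : ∀ i, g (pos i) = zf i := by
    intro i
    have hp1 : pos i < ((T i).stem ++ [zf i]).length := by simp; exact le_refl _
    have hp2 : pos i < (T (i + 1)).stem.length := by
      have := (hzpre i).length_le
      simp only [List.length_append, List.length_singleton] at this
      show (T i).stem.length < _
      omega
    rw [← g_eq (i + 1) (pos i) hp2]
    simp only [List.get_eq_getElem]
    rw [← (hzpre i).getElem hp1]
    exact List.getElem_concat_length rfl _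
  have gA_iff : ∀ n, g n ∈ A ↔ ∃ i, pos i = n := by
    intro n
    constructor
    · intro hgA
      have key : ∀ j n (h : n < (T j).stem.length), g n ∈ A → ∃ i, pos i = n := by
        intro j
        induction j with
        | zero =>
          intro n h hn
          exfalso
          have := hT0out.2 n h (Nat.zero_le _)
          rw [g_eq 0 n h] at this
          exact this hn
        | succ j ihj =>
          intro n h hn
          rcases Nat.lt_or_ge n (T j).stem.length with h' | h'
          · exact ihj n h' hn
          · rcases Nat.eq_or_lt_of_le h' with h'' | h''
            · exact ⟨j, show (T j).stem.length = n from h''⟩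
            · exfalso
              have hge : ((T j).stem ++ [zf j]).length ≤ n := by simp; omega
              have := (hzout j).2 n h hge
              rw [g_eq (j + 1) n h] at this
              exact this hn
      exact key (n + 1) n (hlen n) hgA
    · rintro ⟨i, rfl⟩
      rw [gval i]
      exact hzA i
  -- assembling the result
  refine ⟨T, hsub, hmem, g, ⟨fun i k h => g_eq i k h, fun n => ⟨n + 1, hlen n⟩⟩, ?_⟩
  -- the Turing reduction
  set O : ℕ → ℕ := join (chi A) g with hO_def
  have hOeven : ∀ n, O (2 * n) = chi A n := by
    intro n
    show join (chi A) g (2 * n) = chi A n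
    unfold join
    rw [if_pos (Nat.mul_mod_right 2 n), Nat.mul_div_cancel_left n (by norm_num : 0 < 2)]
  have hOodd : ∀ n, O (2 * n + 1) = g n := by
    intro n
    show join (chi A) g (2 * n + 1) = g n
    unfold join
    rw [if_neg (by omega : ¬ (2 * n + 1) % 2 = 0)]
    congr 1
    omega
  have hchi : ∀ m, chi A m = 1 ↔ m ∈ A := by
    intro m
    unfold chi
    split_ifs with h
    · simpa using h
    · simpa using h
  have hcount : ∀ z : ℕ, (∑ m ∈ Finset.range z, chi A m) = Nat.count (· ∈ A) z := by
    intro z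
    induction z with
    | zero => simp
    | succ z ih =>
      rw [Finset.sum_range_succ, ih, Nat.count_succ]
      unfold chi
      split_ifs with h
      · rfl
      · rfl
  apply master_reduction O x pos hposmono
  · intro n
    rw [hOodd n, hOeven (g n), hchi (g n)]
    exact gA_iff n
  · intro i
    rw [hOodd (pos i), gval i]
    have : (∑ m ∈ Finset.range (zf i), O (2 * m)) = Nat.count (· ∈ A) (zf i) := by
      rw [← hcount (zf i)]
      exact Finset.sum_congr rfl fun m _ => hOeven m
    rw [this, hzc i]

end GCH
end

section
/- Let 𝒟 be a dense subset of the tree Hechler poset ℍ and let S := {stem(T) : T ∈ 𝒟}. Then every finite sequence t ∈ ℕ^{<ω} is S-reachable. -/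
namespace GCH

theorem succ_reach_finite (S : Set (List ℕ)) (s : List ℕ) (h : ¬ SReachable S s) :
    {z : ℕ | SReachable S (s ++ [z])}.Finite := by
  classical
  by_contra hfin
  have hinf : {z : ℕ | SReachable S (s ++ [z])}.Infinite := hfin
  apply h
  set f : ℕ → Ordinal.{0} := fun z =>
    if hz : SReachable S (s ++ [z]) then hz.choose else 0 with hf
  refine ⟨Ordinal.lsub f, ?_⟩
  rw [ReachAt]
  have hα : Ordinal.lsub f ≠ 0 :=
    (lt_of_le_of_lt (zero_le (a := f 0)) (Ordinal.lt_lsub f 0)).ne'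
  rw [if_neg hα]
  apply hinf.mono
  intro z hz
  have hfz : f z = (hz : SReachable S (s ++ [z])).choose := dif_pos hz
  exact ⟨hz.choose, hfz ▸ Ordinal.lt_lsub f z, hz.choose_spec⟩

/-- Every finite sequence is reachable for the set of stems of a dense set. -/
theorem reachable_of_dense (D : Set Hechler) (hdense : HDense D) (t : List ℕ) :
    SReachable (stems D) t := by
  classical
  by_contra h
  set S := stems D with hS
  set Tr : Set (List ℕ) :=
    {s | s <+: t ∨ (t <+: s ∧ ∀ s', t <+: s' → s' <+: s → ¬ SReachable S s')} with hTr
  have htTr : t ∈ Tr := Or.inl List.prefix_rfl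
  have key : ∀ s ∈ Tr, t <+: s → ∀ s', t <+: s' → s' <+: s → ¬ SReachable S s' := by
    intro s hs hts
    rcases hs with h1 | h2
    · have hst : s = t := h1.eq_of_length (le_antisymm h1.length_le hts.length_le)
      subst hst
      intro s' h1' h2'
      have : s' = s := h2'.eq_of_length (le_antisymm h2'.length_le h1'.length_le)
      subst this
      exact h
    · exact h2.2
  have hclosed : ∀ ⦃s u : List ℕ⦄, s <+: u → u ∈ Tr → s ∈ Tr := by
    intro s u hsu hu
    rcases hu with h1 | ⟨h1, P⟩
    · exact Or.inl (hsu.trans h1)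
    · rcases List.prefix_or_prefix_of_prefix hsu h1 with hc | hc
      · exact Or.inl hc
      · exact Or.inr ⟨hc, fun s' a b => P s' a (b.trans hsu)⟩
  have hcomp : ∀ s ∈ Tr, t <+: s ∨ s <+: t := by
    intro s hs
    rcases hs with h1 | h2
    · exact Or.inr h1
    · exact Or.inl h2.1
  have hzTrOf : ∀ z : ℕ, ¬ SReachable S (t ++ [z]) → t ++ [z] ∈ Tr := by
    intro z hz
    refine Or.inr ⟨List.prefix_append t [z], ?_⟩
    intro s' h1 h2
    have hl1 : t.length ≤ s'.length := h1.length_le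
    have hl2 : s'.length ≤ t.length + 1 := by simpa using h2.length_le
    rcases eq_or_lt_of_le hl1 with he | hlt
    · have : t = s' := h1.eq_of_length he
      subst this; exact h
    · have : s' = t ++ [z] := h2.eq_of_length (by simp; omega)
      subst this; exact hz
  have hlongest : ∀ s ∈ Tr, (∀ u ∈ Tr, s <+: u ∨ u <+: s) → s.length ≤ t.length := by
    intro s hs hall
    by_contra hlen
    push_neg at hlen
    have hts : t <+: s := by
      rcases hs with h1 | h2
      · exact absurd h1.length_le (by omega)
      · exact h2.1
    have hF := succ_reach_finite S t h
    obtain ⟨z, hz1, hz2⟩ :=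
      ((hF.infinite_compl).diff (Set.finite_singleton (s[t.length]'hlen))).nonempty
    simp only [Set.mem_diff, Set.mem_compl_iff, Set.mem_setOf_eq, Set.mem_singleton_iff] at hz1 hz2
    have hzTr : t ++ [z] ∈ Tr := hzTrOf z hz1
    rcases hall _ hzTr with hc | hc
    · -- s <+: t ++ [z]
      have : s = t ++ [z] := hc.eq_of_length
        (le_antisymm hc.length_le (by simpa using hlen))
      apply hz2
      subst this
      exact (List.getElem_concat_length (l := t) (a := z) (i := t.length) rfl _).symm
    · -- t ++ [z] <+: s
      apply hz2
      have h5 := hc.getElem (i := t.length) (by simp)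
      rw [List.getElem_concat_length (l := t) (a := z) (i := t.length) rfl] at h5
      exact h5
  have hsucc : ∀ s ∈ Tr, t <+: s → {z : ℕ | s ++ [z] ∉ Tr}.Finite := by
    intro s hs hts
    have P := key s hs hts
    have hns : ¬ SReachable S s := P s hts List.prefix_rfl
    apply (succ_reach_finite S s hns).subset
    intro z hz
    by_contra hr
    apply hz
    refine Or.inr ⟨hts.trans (List.prefix_append s [z]), ?_⟩
    intro s' h1 h2
    rcases List.prefix_or_prefix_of_prefix h2 (List.prefix_append s [z]) with hc | hc
    · exact P s' h1 hc
    · have hl2 : s'.length ≤ s.length + 1 := by simpa using h2.length_le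
      rcases eq_or_lt_of_le hc.length_le with he | hlt
      · have : s = s' := hc.eq_of_length he
        subst this; exact hns
      · have : s' = s ++ [z] := h2.eq_of_length (by simp; omega)
        subst this; exact hr
  obtain ⟨T', hT'D, hsub⟩ :=
    hdense ⟨Tr, ⟨t, htTr⟩, hclosed, t, htTr, hcomp, hlongest, hsucc⟩
  have hstemS : T'.stem ∈ S := ⟨T', hT'D, rfl⟩
  have hreach : SReachable S T'.stem := ⟨0, by rw [ReachAt]; simpa using hstemS⟩
  have hstemTr : T'.stem ∈ Tr := hsub T'.stem_mem
  by_cases hts : t <+: T'.stem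
  · exact key _ hstemTr hts T'.stem hts List.prefix_rfl hreach
  · have hpt : T'.stem <+: t := (hcomp _ hstemTr).resolve_left hts
    have hlt : T'.stem.length < t.length := by
      rcases eq_or_lt_of_le hpt.length_le with he | hl
      · exact absurd (hpt.eq_of_length he ▸ List.prefix_rfl) hts
      · exact hl
    set w := t[T'.stem.length]'hlt with hw
    have hfin := T'.succ_cofinite T'.stem T'.stem_mem List.prefix_rfl
    have hinf : {z : ℕ | T'.stem ++ [z] ∈ T'.tree}.Infinite := by
      have := hfin.infinite_compl
      simpa [Set.compl_setOf] using this
    apply hinf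
    apply (Set.finite_singleton w).subset
    intro z hz
    have hzTr : T'.stem ++ [z] ∈ Tr := hsub hz
    have hpre : T'.stem ++ [z] <+: t := by
      rcases hzTr with h1 | h2
      · exact h1
      · have hle : t.length ≤ T'.stem.length + 1 := by simpa using h2.1.length_le
        have : t = T'.stem ++ [z] := h2.1.eq_of_length (by simp; omega)
        rw [this]
    have h5 := hpre.getElem (i := T'.stem.length) (by simp)
    rw [List.getElem_concat_length (l := T'.stem) (a := z) (i := T'.stem.length) rfl] at h5
    exact h5

end GCH
end

section
/- Let S ⊆ ℕ^{<ω} and let t ∈ ℕ^{<ω} be a finite sequence that is not S-reachable. Then there exists a condition T in the tree Hechler poset ℍ with stem(T) = t such that no node of T extending t is S-reachable; in particular, no node of T extending t belongs to S, and hence no T' ∈ ℍ with T' ⊆ T has its stem in S. -/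
namespace GCH

lemma mem_reach0 {S : Set (List ℕ)} {s : List ℕ} (h : s ∈ S) : SReachable S s := by
  refine ⟨0, ?_⟩
  rw [ReachAt]
  simp [h]

lemma finite_reach_succ {S : Set (List ℕ)} {s : List ℕ} (hs : ¬ SReachable S s) :
    {z : ℕ | SReachable S (s ++ [z])}.Finite := by
  classical
  by_contra h
  have hZ : {z : ℕ | SReachable S (s ++ [z])}.Infinite := h
  set g : ℕ → Ordinal.{0} := fun z =>
    if h : SReachable S (s ++ [z]) then h.choose else 0 with hgdef
  have hg : ∀ z ∈ {z : ℕ | SReachable S (s ++ [z])}, ReachAt S (g z) (s ++ [z]) := by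
    intro z hz
    have hz' : SReachable S (s ++ [z]) := hz
    simp only [hgdef]
    rw [dif_pos hz']
    exact hz'.choose_spec
  set α : Ordinal.{0} := Order.succ (⨆ z, g z) with hα
  have hα0 : α ≠ 0 := Ordinal.succ_ne_zero _
  apply hs
  refine ⟨α, ?_⟩
  rw [ReachAt, if_neg hα0]
  apply hZ.mono
  intro z hz
  refine ⟨g z, ?_, hg z hz⟩
  exact Order.lt_succ_iff.mpr (Ordinal.le_iSup g z)

/-- If `t` is not `S`-reachable then there is a condition with stem `t` none of whose
nodes extending `t` is `S`-reachable; in particular none is in `S`, and no stronger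
condition has its stem in `S`. -/
theorem tree_avoiding_S (S : Set (List ℕ)) (t : List ℕ) (ht : ¬ SReachable S t) :
    ∃ T : Hechler, T.stem = t ∧
      (∀ s ∈ T.tree, t <+: s → ¬ SReachable S s) ∧
      (∀ s ∈ T.tree, t <+: s → s ∉ S) ∧
      ∀ T' : Hechler, T'.tree ⊆ T.tree → T'.stem ∉ S := by
  classical
  set Tr : Set (List ℕ) :=
    {s | s <+: t ∨ (t <+: s ∧ ∀ u, t <+: u → u <+: s → ¬ SReachable S u)} with hTr
  have htTr : t ∈ Tr := Or.inl (List.prefix_refl t)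
  have hclosed : ∀ ⦃s u : List ℕ⦄, s <+: u → u ∈ Tr → s ∈ Tr := by
    intro s u hsu hu
    rcases hu with hu | ⟨htu, hu⟩
    · exact Or.inl (hsu.trans hu)
    · rcases List.prefix_or_prefix_of_prefix hsu htu with h | h
      · exact Or.inl h
      · exact Or.inr ⟨h, fun v hv hvs => hu v hv (hvs.trans hsu)⟩
  have hnotreach : ∀ s ∈ Tr, t <+: s → ¬ SReachable S s := by
    intro s hs hts
    rcases hs with hs | ⟨_, hs⟩
    · have heq : s = t := hs.eq_of_length_le hts.length_le
      rw [heq]; exact ht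
    · exact hs s hts (List.prefix_refl s)
  -- extending a node of the tree by a non-reachable value stays in the tree
  have hext : ∀ s ∈ Tr, t <+: s → ∀ z : ℕ, ¬ SReachable S (s ++ [z]) → s ++ [z] ∈ Tr := by
    intro s hs hts z hz
    have hs' : ∀ u, t <+: u → u <+: s → ¬ SReachable S u := by
      rcases hs with hs | ⟨_, hs⟩
      · intro u htu hus
        have : u = t := ((hus.trans hs).eq_of_length_le htu.length_le)
        rw [this]; exact ht
      · exact hs
    refine Or.inr ⟨hts.trans (List.prefix_append _ _), ?_⟩
    intro u htu hus
    rcases List.prefix_concat_iff.mp hus with h | h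
    · rw [h]; exact hz
    · exact hs' u htu h
  -- cofinitely many successors
  have hcof : ∀ s ∈ Tr, t <+: s → {z : ℕ | s ++ [z] ∉ Tr}.Finite := by
    intro s hs hts
    apply (finite_reach_succ (hnotreach s hs hts)).subset
    intro z hz
    by_contra hzr
    exact hz (hext s hs hts z hzr)
  -- comparability with t
  have hcomp : ∀ s ∈ Tr, t <+: s ∨ s <+: t := by
    rintro s (hs | ⟨hs, -⟩)
    · exact Or.inr hs
    · exact Or.inl hs
  -- the stem is t : maximality
  have hlongest : ∀ s ∈ Tr, (∀ u ∈ Tr, s <+: u ∨ u <+: s) → s.length ≤ t.length := by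
    intro s hs hcmp
    rcases hcomp s hs with hts | hst
    · by_contra hlen
      push_neg at hlen
      -- s properly extends t
      have hlt : t.length < s.length := hlen
      -- choose z' avoiding the finitely many reachable successors and the value of s
      obtain ⟨z, hz⟩ := (((finite_reach_succ ht).union
        (Set.finite_singleton (s.get ⟨t.length, hlt⟩))).infinite_compl).nonempty
      simp only [Set.compl_union, Set.mem_inter_iff, Set.mem_compl_iff, Set.mem_setOf_eq,
        Set.mem_singleton_iff] at hz
      obtain ⟨hz1, hz2⟩ := hz
      have hw : t ++ [z] ∈ Tr := hext t htTr (List.prefix_refl t) z hz1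
      rcases hcmp (t ++ [z]) hw with h | h
      · -- s <+: t ++ [z] : then s = t ++ [z], so value matches, contradiction
        have hle : s.length ≤ t.length + 1 := by simpa using h.length_le
        have heq : s = t ++ [z] := by
          apply List.IsPrefix.eq_of_length h
          simp only [List.length_append, List.length_singleton]
          omega
        apply hz2
        subst heq
        simp [List.get_eq_getElem]
      · -- t ++ [z] <+: s : values at position t.length agree
        apply hz2
        have hlt2 : t.length < (t ++ [z]).length := by simp
        have := h.getElem (i := t.length) hlt2
        rw [List.get_eq_getElem]
        rw [← this]
        simp
    · exact hst.length_le
  refine ⟨⟨Tr, ⟨t, htTr⟩, hclosed, t, htTr, hcomp, hlongest, fun s hs hts => hcof s hs hts⟩,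
    rfl, hnotreach, ?_, ?_⟩
  · intro s hs hts hsS
    exact hnotreach s hs hts (mem_reach0 hsS)
  · -- no stronger condition has its stem in S
    intro T' hsub hstem
    have hmem : T'.stem ∈ Tr := hsub T'.stem_mem
    rcases hcomp T'.stem hmem with h | h
    · exact hnotreach T'.stem hmem h (mem_reach0 hstem)
    · -- T'.stem <+: t
      rcases Nat.lt_or_ge T'.stem.length t.length with hlt | hge
      · -- proper prefix: T'.stem has cofinitely many successors in T', but
        -- all nodes of Tr of length T'.stem.length + 1 comparable with t are unique
        have hfin := T'.succ_cofinite T'.stem T'.stem_mem (List.prefix_refl _)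
        obtain ⟨z, hz⟩ := ((hfin.union
          (Set.finite_singleton (t.get ⟨T'.stem.length, hlt⟩))).infinite_compl).nonempty
        simp only [Set.compl_union, Set.mem_inter_iff, Set.mem_compl_iff, Set.mem_setOf_eq,
          Set.mem_singleton_iff, not_not] at hz
        obtain ⟨hz1, hz2⟩ := hz
        have hw : T'.stem ++ [z] ∈ Tr := hsub hz1
        apply hz2
        have hcmp2 : t <+: T'.stem ++ [z] ∨ T'.stem ++ [z] <+: t := hcomp _ hw
        have hlt2 : T'.stem.length < (T'.stem ++ [z]).length := by simp
        rcases hcmp2 with h2 | h2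
        · have hle : t.length ≤ T'.stem.length + 1 := by simpa using h2.length_le
          have heq : t = T'.stem ++ [z] := by
            apply List.IsPrefix.eq_of_length h2
            simp only [List.length_append, List.length_singleton]
            omega
          subst heq
          simp [List.get_eq_getElem]
        · have := h2.getElem (i := T'.stem.length) hlt2
          rw [List.get_eq_getElem, ← this]
          simp
      · have heq : T'.stem = t := h.eq_of_length_le hge
        rw [heq] at hstem
        exact ht (mem_reach0 hstem)


end GCH
end
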